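/- Let X be a vector lattice with X~ separating points of X such that the canonical image of X is a regular sublattice of X~~. If for every net x_α in X, order convergence of x̂_α to 0 in X~~ implies order convergence of x_α to 0 in X, then X has the b-property. -/

import Mathlib

set_option linter.unusedSectionVars false
set_option maxHeartbeats 1000000

open Filter Set

section ODual

variable (E : Type*) [AddCommGroup E] [Preorder E] [Module ℝ E]

/-- The order (bounded) dual: linear functionals bounded on order intervals. -/
noncomputable def obDual : Submodule ℝ (E →ₗ[ℝ] ℝ) where
  carrier := {f | ∀ w : E, ∃ M : ℝ, ∀ x : E, -w ≤ x → x ≤ w → |f x| ≤ M}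
  zero_mem' := fun w => ⟨0, fun x _ _ => by simp⟩
  add_mem' := fun {f g} hf hg w => by
    obtain ⟨M, hM⟩ := hf w
    obtain ⟨N, hN⟩ := hg w
    refine ⟨M + N, fun x h1 h2 => ?_⟩
    calc |(f + g) x| = |f x + g x| := by simp
    _ ≤ |f x| + |g x| := abs_add_le _ _
    _ ≤ M + N := add_le_add (hM x h1 h2) (hN x h1 h2)
  smul_mem' := fun c f hf => by
    intro w
    obtain ⟨M, hM⟩ := hf w
    refine ⟨|c| * M, fun x h1 h2 => ?_⟩
    calc |(c • f) x| = |c| * |f x| := by simp [abs_mul]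
    _ ≤ |c| * M := mul_le_mul_of_nonneg_left (hM x h1 h2) (abs_nonneg c)

/-- Port helper: the additive group structure on `obDual E` (as in the older library). -/
noncomputable instance instObDualAddCommGroup : AddCommGroup (obDual E) := Submodule.addCommGroup _

/-- The pointwise-on-positive-elements (pre)order on a space of functionals. -/
instance instSubPre (Y : Submodule ℝ (E →ₗ[ℝ] ℝ)) : Preorder Y where
  le f g := ∀ x : E, 0 ≤ x → (f : E →ₗ[ℝ] ℝ) x ≤ (g : E →ₗ[ℝ] ℝ) x
  le_refl f x _ := le_rfl
  le_trans f g h h1 h2 x hx := (h1 x hx).trans (h2 x hx)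

variable {E}

theorem subPre_le_iff {Y : Submodule ℝ (E →ₗ[ℝ] ℝ)} {f g : Y} :
    f ≤ g ↔ ∀ x : E, 0 ≤ x → (f : E →ₗ[ℝ] ℝ) x ≤ (g : E →ₗ[ℝ] ℝ) x := Iff.rfl

/-- Order convergence of a net to a limit (sandwich form: eventually
`l - d ≤ x_α ≤ l + d` for every `d` in a set directed downward to `0`). -/
def OConvTo {ι : Type*} [Preorder ι] (x : ι → E) (l : E) : Prop :=
  ∃ D : Set E, D.Nonempty ∧ DirectedOn (· ≥ ·) D ∧ IsGLB D 0 ∧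
    ∀ d ∈ D, ∃ α₀ : ι, ∀ α, α₀ ≤ α → l - d ≤ x α ∧ x α ≤ l + d

/-- Order continuity of a linear functional: `f(x_α) → 0` whenever `x_α ↓ 0`. -/
def OrdContE (f : E →ₗ[ℝ] ℝ) : Prop :=
  ∀ D : Set E, D.Nonempty → DirectedOn (· ≥ ·) D → IsGLB D 0 →
    ∀ ε : ℝ, 0 < ε → ∃ d ∈ D, ∀ e ∈ D, e ≤ d → |f e| < ε

end ODual

section VL

variable (X : Type*) [Lattice X] [AddCommGroup X]
  [CovariantClass X X (· + ·) (· ≤ ·)] [Module ℝ X] [PosSMulMono ℝ X]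

variable {X} in
/-- Unbounded order convergence: `|x_α - l| ⊓ u →o 0` for every `u ≥ 0`. -/
def uoConvTo {ι : Type*} [Preorder ι] (x : ι → X) (l : X) : Prop :=
  ∀ u : X, 0 ≤ u → OConvTo (fun α => |x α - l| ⊓ u) (0 : X)

/-- The canonical evaluation of `x ∈ X` on a space `Y` of functionals on `X`. -/
def hatFun (Y : Submodule ℝ (X →ₗ[ℝ] ℝ)) (x : X) : Y →ₗ[ℝ] ℝ where
  toFun f := (f : X →ₗ[ℝ] ℝ) x
  map_add' f g := by simp
  map_smul' c f := by simp

theorem hatFun_mem (Y : Submodule ℝ (X →ₗ[ℝ] ℝ)) (x : X) :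
    hatFun X Y x ∈ obDual Y := by
  intro w
  refine ⟨(w : X →ₗ[ℝ] ℝ) (x⁺) + (w : X →ₗ[ℝ] ℝ) (x⁻), fun f h1 h2 => ?_⟩
  have hp : (0 : X) ≤ x⁺ := posPart_nonneg x
  have hn : (0 : X) ≤ x⁻ := negPart_nonneg x
  have e1 := (subPre_le_iff.mp h1) _ hp
  have e2 := (subPre_le_iff.mp h2) _ hp
  have e3 := (subPre_le_iff.mp h1) _ hn
  have e4 := (subPre_le_iff.mp h2) _ hn
  have c1 : -((w : X →ₗ[ℝ] ℝ) (x⁺)) ≤ (f : X →ₗ[ℝ] ℝ) (x⁺) := by simpa using e1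
  have c3 : -((w : X →ₗ[ℝ] ℝ) (x⁻)) ≤ (f : X →ₗ[ℝ] ℝ) (x⁻) := by simpa using e3
  have key : (f : X →ₗ[ℝ] ℝ) x
      = (f : X →ₗ[ℝ] ℝ) (x⁺) - (f : X →ₗ[ℝ] ℝ) (x⁻) := by
    rw [← map_sub, posPart_sub_negPart]
  show |(f : X →ₗ[ℝ] ℝ) x| ≤ _
  rw [key]
  have a1 : |(f : X →ₗ[ℝ] ℝ) (x⁺)| ≤ (w : X →ₗ[ℝ] ℝ) (x⁺) := abs_le.mpr ⟨c1, e2⟩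
  have a2 : |(f : X →ₗ[ℝ] ℝ) (x⁻)| ≤ (w : X →ₗ[ℝ] ℝ) (x⁻) := abs_le.mpr ⟨c3, e4⟩
  have := abs_sub ((f : X →ₗ[ℝ] ℝ) (x⁺)) ((f : X →ₗ[ℝ] ℝ) (x⁻))
  linarith

/-- The canonical embedding of `X` into the order dual of `Y ⊆ X~`. -/
def hatEl (Y : Submodule ℝ (X →ₗ[ℝ] ℝ)) (x : X) : obDual Y :=
  ⟨hatFun X Y x, hatFun_mem X Y x⟩

/-- `X~` separates the points of `X`. -/
def SepPoints : Prop := ∀ x : X, x ≠ 0 → ∃ f : obDual X, (f : X →ₗ[ℝ] ℝ) x ≠ 0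

/-- The canonical image of `X` in `X~~` is a regular sublattice:
`x_α ↓ 0` in `X` implies `x̂_α ↓ 0` in `X~~`. -/
def HatRegular : Prop :=
  ∀ D : Set X, D.Nonempty → DirectedOn (· ≥ ·) D → IsGLB D 0 →
    IsGLB (hatEl X (obDual X) '' D) (0 : obDual ↥(obDual X))

variable {X} in
/-- The net `x̂_α` is eventually order bounded in `X~~`. -/
def HatEvOB {ι : Type*} [Preorder ι] (x : ι → X) : Prop :=
  ∃ (b t : obDual ↥(obDual X)) (α₀ : ι), ∀ α, α₀ ≤ α →
    b ≤ hatEl X (obDual X) (x α) ∧ hatEl X (obDual X) (x α) ≤ t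

variable {X} in
/-- Bidual bounded uo-convergence. -/
def bbuoConvTo {ι : Type*} [Preorder ι] (x : ι → X) (l : X) : Prop :=
  uoConvTo x l ∧ HatEvOB x

/-- `X` has the `b`-property: every subset of `X` whose canonical image is
order bounded in `X~~` is order bounded in `X`. -/
def HasBProp : Prop :=
  ∀ A : Set X,
    (∃ b t : obDual ↥(obDual X), ∀ a ∈ A,
        b ≤ hatEl X (obDual X) a ∧ hatEl X (obDual X) a ≤ t) →
    ∃ b t : X, ∀ a ∈ A, b ≤ a ∧ a ≤ t

/-- The Archimedean property for a lattice-ordered group. -/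
def IsArch : Prop := ∀ x y : X, 0 ≤ x → (∀ n : ℕ, n • x ≤ y) → x = 0

end VL


section BIdx
/-- Auxiliary index type for the net used in the proof below. -/
def BIdx (S T : Type u) : Type u := S × T × ℕ

instance (S T : Type u) : Preorder (BIdx S T) := Preorder.lift (fun p => p.2.2)

theorem BIdx.le_def {S T : Type u} {p q : BIdx S T} : p ≤ q ↔ p.2.2 ≤ q.2.2 :=
  Iff.rfl

instance (S T : Type u) [Nonempty S] [Nonempty T] : Nonempty (BIdx S T) :=
  ⟨(Classical.arbitrary S, Classical.arbitrary T, 0)⟩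

instance (S T : Type u) : IsDirected (BIdx S T) (· ≤ ·) :=
  ⟨fun p q => ⟨(p.1, p.2.1, max p.2.2 q.2.2),
    BIdx.le_def.mpr (le_max_left _ _), BIdx.le_def.mpr (le_max_right _ _)⟩⟩
end BIdx

/-- If the canonical image of `X` is regular in `X~~` and order convergence of
`x̂_α` to `0` in `X~~` always implies order convergence of `x_α` to `0` in `X`,
then `X` has the `b`-property. -/
theorem statement13 {X : Type u} [Lattice X] [AddCommGroup X]
    [CovariantClass X X (· + ·) (· ≤ ·)] [Module ℝ X] [PosSMulMono ℝ X]
    (harch : IsArch X)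
    (hsep : SepPoints X) (hreg : HatRegular X)
    (hyp : ∀ (κ : Type u) [Preorder κ] [Nonempty κ] [IsDirected κ (· ≤ ·)]
      (x : κ → X),
      OConvTo (fun α => hatEl X (obDual X) (x α)) 0 → OConvTo x 0) :
    HasBProp X := by
  intro A hA
  rcases A.eq_empty_or_nonempty with rfl | ⟨a₀, ha₀⟩
  · exact ⟨0, 0, by simp⟩
  obtain ⟨b, t, hbt⟩ := hA
  -- the bound `w = t - b` in the bidual
  set w : obDual ↥(obDual X) := t - b with hw
  have hwval : ∀ f : ↥(obDual X),
      ((w : ↥(obDual X) →ₗ[ℝ] ℝ)) f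
        = (t : ↥(obDual X) →ₗ[ℝ] ℝ) f - (b : ↥(obDual X) →ₗ[ℝ] ℝ) f := by
    intro f; simp [hw]
  have hhat : ∀ (x : X) (f : ↥(obDual X)),
      ((hatEl X (obDual X) x : ↥(obDual X) →ₗ[ℝ] ℝ)) f = (f : X →ₗ[ℝ] ℝ) x :=
    fun x f => rfl
  -- pairwise bound
  have hpair : ∀ a ∈ A, ∀ a' ∈ A, ∀ f : ↥(obDual X), 0 ≤ f →
      |(f : X →ₗ[ℝ] ℝ) a - (f : X →ₗ[ℝ] ℝ) a'|
        ≤ (w : ↥(obDual X) →ₗ[ℝ] ℝ) f := by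
    intro a ha a' ha' f hf
    have h1 := (subPre_le_iff.mp (hbt a ha).1) f hf
    have h2 := (subPre_le_iff.mp (hbt a ha).2) f hf
    have h3 := (subPre_le_iff.mp (hbt a' ha').1) f hf
    have h4 := (subPre_le_iff.mp (hbt a' ha').2) f hf
    rw [hhat] at h1 h2 h3 h4
    rw [hwval, abs_le]
    constructor <;> linarith
  have hw0 : ∀ f : ↥(obDual X), 0 ≤ f → 0 ≤ (w : ↥(obDual X) →ₗ[ℝ] ℝ) f := by
    intro f hf
    have := hpair a₀ ha₀ a₀ ha₀ f hf
    simpa using (abs_nonneg _).trans this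
  -- index type: pairs of elements of A together with a natural number,
  -- ordered by the natural number only
  haveI : Nonempty ↥A := ⟨⟨a₀, ha₀⟩⟩
  set κ : Type u := BIdx ↥A ↥A with hκ
  set x : κ → X := fun p => ((p.2.2 : ℝ) + 1)⁻¹ • ((p.1 : X) - (p.2.1 : X))
    with hx
  have hinv_pos : ∀ n : ℕ, (0:ℝ) < ((n : ℝ) + 1)⁻¹ := by
    intro n; positivity
  have hinv_mono : ∀ {m n : ℕ}, m ≤ n → ((n : ℝ) + 1)⁻¹ ≤ ((m : ℝ) + 1)⁻¹ := by
    intro m n hmn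
    apply inv_anti₀ (by positivity)
    have : (m : ℝ) ≤ n := Nat.cast_le.mpr hmn
    linarith
  have hsmulval : ∀ (c : ℝ) (z : obDual ↥(obDual X)) (f : ↥(obDual X)),
      ((c • z : obDual ↥(obDual X)) : ↥(obDual X) →ₗ[ℝ] ℝ) f
        = c * (z : ↥(obDual X) →ₗ[ℝ] ℝ) f := by
    intro c z f; simp
  -- the hat-image of the net order converges to 0 in the bidual
  have hOC : OConvTo (fun α => hatEl X (obDual X) (x α))
      (0 : obDual ↥(obDual X)) := by
    refine ⟨{z | ∃ n : ℕ, z = ((n : ℝ) + 1)⁻¹ • w}, ⟨_, ⟨0, rfl⟩⟩,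
      ?_, ?_, ?_⟩
    · rintro _ ⟨m, rfl⟩ _ ⟨n, rfl⟩
      refine ⟨(((max m n : ℕ) : ℝ) + 1)⁻¹ • w, ⟨max m n, rfl⟩, ?_, ?_⟩
      · intro f hf
        rw [hsmulval, hsmulval]
        exact mul_le_mul_of_nonneg_right (hinv_mono (le_max_left m n)) (hw0 f hf)
      · intro f hf
        rw [hsmulval, hsmulval]
        exact mul_le_mul_of_nonneg_right (hinv_mono (le_max_right m n)) (hw0 f hf)
    · constructor
      · rintro _ ⟨n, rfl⟩ f hf
        rw [hsmulval]
        have : ((0 : obDual ↥(obDual X)) : ↥(obDual X) →ₗ[ℝ] ℝ) f = 0 := by simp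
        rw [this]
        exact mul_nonneg (le_of_lt (hinv_pos n)) (hw0 f hf)
      · intro c hc f hf
        have h0 : ((0 : obDual ↥(obDual X)) : ↥(obDual X) →ₗ[ℝ] ℝ) f = 0 := by
          simp
        rw [h0]
        have key : ∀ ε : ℝ, 0 < ε → (c : ↥(obDual X) →ₗ[ℝ] ℝ) f ≤ ε := by
          intro ε hε
          obtain ⟨n, hn⟩ := exists_nat_gt
            ((w : ↥(obDual X) →ₗ[ℝ] ℝ) f / ε)
          have h1 := hc ⟨n, rfl⟩ f hf
          rw [hsmulval] at h1
          have h2 : ((n : ℝ) + 1)⁻¹ * (w : ↥(obDual X) →ₗ[ℝ] ℝ) f ≤ ε := by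
            rw [inv_mul_le_iff₀ (by positivity)]
            have := hw0 f hf
            have hdiv : (w : ↥(obDual X) →ₗ[ℝ] ℝ) f / ε < (n : ℝ) := hn
            rw [div_lt_iff₀ hε] at hdiv
            nlinarith
          linarith
        by_contra hcf
        push_neg at hcf
        have := key ((c : ↥(obDual X) →ₗ[ℝ] ℝ) f / 2) (by linarith)
        linarith
    · rintro _ ⟨m, rfl⟩
      refine ⟨(⟨a₀, ha₀⟩, ⟨a₀, ha₀⟩, m), ?_⟩
      rintro ⟨a, a', n⟩ hle'
      have hmn : m ≤ n := BIdx.le_def.mp hle'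
      constructor
      · intro f hf
        have hval : ((hatEl X (obDual X) (x (a, a', n)) :
            ↥(obDual X) →ₗ[ℝ] ℝ)) f
            = ((n : ℝ) + 1)⁻¹ * ((f : X →ₗ[ℝ] ℝ) (a : X)
              - (f : X →ₗ[ℝ] ℝ) (a' : X)) := by
          rw [hhat, hx]
          simp [map_sub]
        have habs := hpair (a : X) a.2 (a' : X) a'.2 f hf
        have h1 : -(((m : ℝ) + 1)⁻¹ * (w : ↥(obDual X) →ₗ[ℝ] ℝ) f)
            ≤ ((n : ℝ) + 1)⁻¹ * ((f : X →ₗ[ℝ] ℝ) (a : X)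
              - (f : X →ₗ[ℝ] ℝ) (a' : X)) := by
          have hb2 : |((n : ℝ) + 1)⁻¹ * ((f : X →ₗ[ℝ] ℝ) (a : X)
              - (f : X →ₗ[ℝ] ℝ) (a' : X))|
              ≤ ((m : ℝ) + 1)⁻¹ * (w : ↥(obDual X) →ₗ[ℝ] ℝ) f := by
            rw [abs_mul, abs_of_pos (hinv_pos n)]
            calc ((n : ℝ) + 1)⁻¹ * |(f : X →ₗ[ℝ] ℝ) (a : X)
                - (f : X →ₗ[ℝ] ℝ) (a' : X)|
                ≤ ((n : ℝ) + 1)⁻¹ * (w : ↥(obDual X) →ₗ[ℝ] ℝ) f :=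
                  mul_le_mul_of_nonneg_left habs (le_of_lt (hinv_pos n))
              _ ≤ ((m : ℝ) + 1)⁻¹ * (w : ↥(obDual X) →ₗ[ℝ] ℝ) f :=
                  mul_le_mul_of_nonneg_right (hinv_mono hmn) (hw0 f hf)
          exact neg_le_of_abs_le hb2
        have hL : (((0 : obDual ↥(obDual X)) - ((m : ℝ) + 1)⁻¹ • w :
            obDual ↥(obDual X)) : ↥(obDual X) →ₗ[ℝ] ℝ) f
            = -(((m : ℝ) + 1)⁻¹ * (w : ↥(obDual X) →ₗ[ℝ] ℝ) f) := by
          simp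
        rw [hL, hval]
        exact h1
      · intro f hf
        have hval : ((hatEl X (obDual X) (x (a, a', n)) :
            ↥(obDual X) →ₗ[ℝ] ℝ)) f
            = ((n : ℝ) + 1)⁻¹ * ((f : X →ₗ[ℝ] ℝ) (a : X)
              - (f : X →ₗ[ℝ] ℝ) (a' : X)) := by
          rw [hhat, hx]
          simp [map_sub]
        have habs := hpair (a : X) a.2 (a' : X) a'.2 f hf
        have hb2 : ((n : ℝ) + 1)⁻¹ * ((f : X →ₗ[ℝ] ℝ) (a : X)
            - (f : X →ₗ[ℝ] ℝ) (a' : X))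
            ≤ ((m : ℝ) + 1)⁻¹ * (w : ↥(obDual X) →ₗ[ℝ] ℝ) f := by
          calc ((n : ℝ) + 1)⁻¹ * ((f : X →ₗ[ℝ] ℝ) (a : X)
              - (f : X →ₗ[ℝ] ℝ) (a' : X))
              ≤ ((n : ℝ) + 1)⁻¹ * |(f : X →ₗ[ℝ] ℝ) (a : X)
                - (f : X →ₗ[ℝ] ℝ) (a' : X)| :=
                mul_le_mul_of_nonneg_left (le_abs_self _)
                  (le_of_lt (hinv_pos n))
            _ ≤ ((n : ℝ) + 1)⁻¹ * (w : ↥(obDual X) →ₗ[ℝ] ℝ) f :=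
                mul_le_mul_of_nonneg_left habs (le_of_lt (hinv_pos n))
            _ ≤ ((m : ℝ) + 1)⁻¹ * (w : ↥(obDual X) →ₗ[ℝ] ℝ) f :=
                mul_le_mul_of_nonneg_right (hinv_mono hmn) (hw0 f hf)
        have hR : (((0 : obDual ↥(obDual X)) + ((m : ℝ) + 1)⁻¹ • w :
            obDual ↥(obDual X)) : ↥(obDual X) →ₗ[ℝ] ℝ) f
            = ((m : ℝ) + 1)⁻¹ * (w : ↥(obDual X) →ₗ[ℝ] ℝ) f := by
          simp
        rw [hval, hR]
        exact hb2
  -- apply the hypothesis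
  obtain ⟨D', ⟨d₀, hd₀⟩, _, _, hconv⟩ := hyp κ x hOC
  obtain ⟨α₀, hα₀⟩ := hconv d₀ hd₀
  set n₀ : ℕ := α₀.2.2 with hn₀
  refine ⟨a₀ - ((n₀ : ℝ) + 1) • d₀, a₀ + ((n₀ : ℝ) + 1) • d₀, fun a ha => ?_⟩
  have hle : α₀ ≤ ((⟨a, ha⟩, ⟨a₀, ha₀⟩, n₀) : κ) := BIdx.le_def.mpr (le_refl n₀)
  obtain ⟨h1, h2⟩ := hα₀ (⟨a, ha⟩, ⟨a₀, ha₀⟩, n₀) hle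
  rw [hx] at h1 h2
  simp only [zero_sub, zero_add] at h1 h2
  have hpos : (0:ℝ) ≤ (n₀ : ℝ) + 1 := by positivity
  have hne : ((n₀ : ℝ) + 1) ≠ 0 := by positivity
  have hs1 : ((n₀ : ℝ) + 1) • (-d₀) ≤ ((n₀ : ℝ) + 1) •
      (((n₀ : ℝ) + 1)⁻¹ • (a - a₀)) := smul_le_smul_of_nonneg_left h1 hpos
  have hs2 : ((n₀ : ℝ) + 1) • (((n₀ : ℝ) + 1)⁻¹ • (a - a₀))
      ≤ ((n₀ : ℝ) + 1) • d₀ := smul_le_smul_of_nonneg_left h2 hpos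
  rw [smul_smul, mul_inv_cancel₀ hne, one_smul] at hs1 hs2
  constructor
  · have := add_le_add (le_refl a₀) hs1
    have heq : a₀ + (a - a₀) = a := by abel
    rw [heq] at this
    have heq2 : a₀ + ((n₀ : ℝ) + 1) • (-d₀) = a₀ - ((n₀ : ℝ) + 1) • d₀ := by
      rw [smul_neg]; abel
    rw [heq2] at this
    exact this
  · have := add_le_add (le_refl a₀) hs2
    have heq : a₀ + (a - a₀) = a := by abel
    rw [heq] at this
    exact this
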